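/- Reach-set characterization of assumption consistency: for a timed Büchi automaton 𝒜, an 𝒜-observation o with words of duration at most t, the set Cons_𝒜(o) ·_t TΣ^ω ∩ L(𝒜) is nonempty if and only if the reach-set Reach_𝒜(Cons_𝒜(o), t) intersects the set NonEmpty(𝒜) of states of 𝒜 with nonempty language. -/

import Mathlib

open Classical

/-- A finite timed word: a finite sequence of letters with non-decreasing,
non-negative timestamps. -/
structure FTW (Sigma : Type) where
  toList : List (Sigma × ℝ)
  nonneg : ∀ p ∈ toList, 0 ≤ p.2
  mono : (toList.map Prod.snd).Chain' (· ≤ ·)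

/-- τ(ρ): the last timestamp of a finite timed word (0 for the empty word). -/
def FTW.dur {Sigma : Type} (ρ : FTW Sigma) : ℝ := (ρ.toList.map Prod.snd).getLastD 0

/-- An infinite timed word: letters with non-decreasing, non-negative,
divergent timestamps.  The set of all such words is TΣ^ω, here `Set.univ`. -/
structure ITW (Sigma : Type) where
  σ : ℕ → Sigma
  τ : ℕ → ℝ
  nonneg : ∀ i, 0 ≤ τ i
  mono : Monotone τ
  div : Filter.Tendsto τ Filter.atTop Filter.atTop

/-- ρ is the concatenation ρ₁ ·_t ρ₂ of a finite and an infinite timed word: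
the timestamps of ρ₂ are shifted by t. -/
def IsConcat {Sigma : Type} (ρ₁ : FTW Sigma) (t : ℝ) (ρ₂ : ITW Sigma) (ρ : ITW Sigma) : Prop :=
  ρ₁.dur ≤ t ∧
  (∀ i : Fin ρ₁.toList.length, ρ.σ i = (ρ₁.toList.get i).1 ∧ ρ.τ i = (ρ₁.toList.get i).2) ∧
  (∀ i, ρ₁.toList.length ≤ i →
    ρ.σ i = ρ₂.σ (i - ρ₁.toList.length) ∧ ρ.τ i = ρ₂.τ (i - ρ₁.toList.length) + t)

/-- L₁ ·_t L₂, elementwise concatenation at time t. -/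
def concatSet {Sigma : Type} (L₁ : Set (FTW Sigma)) (t : ℝ) (L₂ : Set (ITW Sigma)) :
    Set (ITW Sigma) :=
  {ρ | ∃ ρ₁ ∈ L₁, ∃ ρ₂ ∈ L₂, IsConcat ρ₁ t ρ₂ ρ}

/-- ρ is the concatenation ρ₁ ·_t ρ₂ of two finite timed words. -/
def IsConcatF {Sigma : Type} (ρ₁ : FTW Sigma) (t : ℝ) (ρ₂ ρ : FTW Sigma) : Prop :=
  ρ₁.dur ≤ t ∧ ρ.toList = ρ₁.toList ++ ρ₂.toList.map (fun p => (p.1, p.2 + t))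

/-- O ⊑_t O': the observation O' extends the observation O at time t. -/
def Extends {Sigma : Type} (O : Set (FTW Sigma)) (t : ℝ) (O' : Set (FTW Sigma)) : Prop :=
  (∀ o ∈ O, ∃ ostar ρ', ρ' ∈ O' ∧ IsConcatF o t ostar ρ') ∧
  (∀ o' ∈ O', ∃ o ∈ O, ∃ ostar, IsConcatF o t ostar o')

/-- A timed Büchi automaton with locations Q, alphabet Sigma, clocks C.
Guards are modelled as predicates on clock valuations. -/
structure TBA (Sigma Q C : Type) where
  init : Set Q
  trans : Set (Q × Q × Sigma × Set C × ((C → ℝ) → Prop))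
  acc : Set Q

/-- One transition step of the TBA: from state s, reading letter a after d time
units have elapsed since the previous event, reaching state s'. -/
def Step {Sigma Q C : Type} (M : TBA Sigma Q C) (s : Q × (C → ℝ)) (a : Sigma) (d : ℝ)
    (s' : Q × (C → ℝ)) : Prop :=
  ∃ lam g, (s.1, s'.1, a, lam, g) ∈ M.trans ∧ g (fun c => s.2 c + d) ∧
    s'.2 = fun c => if c ∈ lam then 0 else s.2 c + d

/-- The timestamp of the previous event (0 before the first event, τ₀ = 0). -/
def prevT {Sigma : Type} (ρ : ITW Sigma) (i : ℕ) : ℝ := if i = 0 then 0 else ρ.τ (i - 1)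

/-- r is an accepting run of M from state s over the infinite timed word ρ:
it starts in s, every step is a valid transition, and accepting locations are
visited infinitely often. -/
def AccRunFrom {Sigma Q C : Type} (M : TBA Sigma Q C) (s : Q × (C → ℝ)) (ρ : ITW Sigma)
    (r : ℕ → Q × (C → ℝ)) : Prop :=
  r 0 = s ∧ (∀ i, Step M (r i) (ρ.σ i) (ρ.τ i - prevT ρ i) (r (i + 1))) ∧
  (∀ N, ∃ i, N < i ∧ (r i).1 ∈ M.acc)

/-- L(M, s): the language of M from state s. -/
def LangFrom {Sigma Q C : Type} (M : TBA Sigma Q C) (s : Q × (C → ℝ)) : Set (ITW Sigma) :=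
  {ρ | ∃ r, AccRunFrom M s ρ r}

/-- L(M): the language of M from its initial states with all clocks zero. -/
def Lang {Sigma Q C : Type} (M : TBA Sigma Q C) : Set (ITW Sigma) :=
  {ρ | ∃ q ∈ M.init, ρ ∈ LangFrom M (q, fun _ => 0)}

/-- NonEmpty(M): the states of M with nonempty language. -/
def NonEmptyStates {Sigma Q C : Type} (M : TBA Sigma Q C) : Set (Q × (C → ℝ)) :=
  {s | (LangFrom M s).Nonempty}

/-- The timestamp of the previous event of a finite timed word (list form). -/
def listPrevT {Sigma : Type} (l : List (Sigma × ℝ)) (i : ℕ) : ℝ :=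
  if i = 0 then 0 else (l.map Prod.snd).getD (i - 1) 0

/-- r is a run prefix of M from an initial state processing the finite timed word l:
r i is the state after the first i events. -/
def FinRunFrom {Sigma Q C : Type} (M : TBA Sigma Q C) (r : ℕ → Q × (C → ℝ))
    (l : List (Sigma × ℝ)) : Prop :=
  (∃ q0 ∈ M.init, r 0 = (q0, fun _ => 0)) ∧
  ∀ i : Fin l.length, Step M (r i.1) (l.get i).1 ((l.get i).2 - listPrevT l i.1) (r (i.1 + 1))

/-- Reach_M(L, t): the states reachable by processing some word of L, with clocks
advanced to the current time t (empty contribution when duration exceeds t). -/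
def Reach {Sigma Q C : Type} (M : TBA Sigma Q C) (L : Set (FTW Sigma)) (t : ℝ) :
    Set (Q × (C → ℝ)) :=
  {s | ∃ ρ ∈ L, ρ.dur ≤ t ∧ ∃ r, FinRunFrom M r ρ.toList ∧
    s = ((r ρ.toList.length).1, fun c => (r ρ.toList.length).2 c + (t - ρ.dur))}


lemma getLastD_eq_getD (L : List ℝ) : L.getLastD 0 = L.getD (L.length - 1) 0 := by
  induction L with
  | nil => rfl
  | cons a L ih =>
    cases L with
    | nil => rfl
    | cons b L => simpa using ih

lemma FTW.dur_eq_listPrevT {Sigma : Type} (ρ : FTW Sigma) :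
    ρ.dur = listPrevT ρ.toList ρ.toList.length := by
  unfold FTW.dur listPrevT
  rcases eq_or_ne ρ.toList [] with h | h
  · simp [h]
  · rw [if_neg (by simpa [List.length_eq_zero_iff] using h), getLastD_eq_getD]
    simp

lemma FTW.dur_get {Sigma : Type} (ρ : FTW Sigma) (h : 0 < ρ.toList.length) :
    ρ.dur = (ρ.toList.get ⟨ρ.toList.length - 1, by omega⟩).2 := by
  rw [FTW.dur_eq_listPrevT]
  unfold listPrevT
  rw [if_neg (by omega), List.getD_eq_getElem?_getD,
    List.getElem?_eq_getElem (by simpa using Nat.sub_lt h one_pos)]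
  simp

lemma FTW.dur_nonneg {Sigma : Type} (ρ : FTW Sigma) : 0 ≤ ρ.dur := by
  rcases Nat.eq_zero_or_pos ρ.toList.length with h | h
  · unfold FTW.dur
    rw [List.length_eq_zero_iff.mp h]
    rfl
  · rw [ρ.dur_get h]
    exact ρ.nonneg _ (List.get_mem _ _)

/-- reach-set characterization of assumption consistency:
Cons_𝒜(o) ·_t TΣ^ω ∩ L(𝒜) ≠ ∅ iff Reach_𝒜(Cons_𝒜(o), t) ∩ NonEmpty(𝒜) ≠ ∅,
where O is the set of words consistent with the observation, all of duration ≤ t. -/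
theorem stmt12 {Sigma Q C : Type} [Fintype Sigma] (M : TBA Sigma Q C)
    (O : Set (FTW Sigma)) (t : ℝ) (hdur : ∀ ρ ∈ O, FTW.dur ρ ≤ t) :
    (concatSet O t Set.univ ∩ Lang M).Nonempty ↔
    (Reach M O t ∩ NonEmptyStates M).Nonempty := by
  constructor
  · -- forward direction
    rintro ⟨ρ, ⟨ρ₁, hO, ρ₂, -, hd, hpre, hsuf⟩, q, hq, r, hr0, hstep, hacc⟩
    set n := ρ₁.toList.length with hn
    set l := ρ₁.toList with hl
    have hprev : ∀ i : ℕ, i ≤ n → prevT ρ i = listPrevT l i := by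
      intro i hi
      unfold prevT listPrevT
      rcases Nat.eq_zero_or_pos i with h0 | h0
      · simp [h0]
      · have hlt : i - 1 < n := by omega
        rw [if_neg (by omega), if_neg (by omega), (hpre ⟨i - 1, hlt⟩).2,
          List.getD_eq_getElem?_getD, List.getElem?_eq_getElem (by simpa using hlt)]
        simp
    have hdurn : prevT ρ n = ρ₁.dur := by
      rw [hprev n le_rfl, FTW.dur_eq_listPrevT]
    obtain ⟨r', hr'⟩ : ∃ r' : ℕ → Q × (C → ℝ), ∀ i, r' i =
        if i = 0 then ((r n).1, fun c => (r n).2 c + (t - ρ₁.dur)) else r (n + i) :=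
      ⟨_, fun _ => rfl⟩
    refine ⟨((r n).1, fun c => (r n).2 c + (t - ρ₁.dur)),
      ⟨ρ₁, hO, hd, r, ⟨⟨q, hq, hr0⟩, ?_⟩, rfl⟩, ρ₂, r', ?_, ?_, ?_⟩
    · -- finite run prefix
      intro i
      have h := hstep i.1
      rw [(hpre i).1, (hpre i).2, hprev i.1 i.2.le] at h
      exact h
    · rw [hr' 0]
      simp
    · -- steps of the suffix run
      intro i
      cases i with
      | zero =>
        have h := hstep n
        rw [(hsuf n le_rfl).1, (hsuf n le_rfl).2, hdurn, Nat.sub_self] at h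
        obtain ⟨lam, g, htr, hg, hres⟩ := h
        rw [hr' 0, hr' 1, if_pos rfl, if_neg Nat.one_ne_zero]
        refine ⟨lam, g, htr, ?_, ?_⟩
        · have heq : (fun c => ((r n).2 c + (t - ρ₁.dur)) + (ρ₂.τ 0 - prevT ρ₂ 0)) =
              (fun c => (r n).2 c + (ρ₂.τ 0 + t - ρ₁.dur)) := by
            funext c
            simp [prevT]
            ring
          exact heq ▸ hg
        · rw [hres]
          funext c
          by_cases hc : c ∈ lam <;> simp [hc, prevT] <;> ring
      | succ j =>
        have h := hstep (n + j + 1)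
        rw [(hsuf (n + j + 1) (by omega)).1, (hsuf (n + j + 1) (by omega)).2] at h
        have e1 : n + j + 1 - n = j + 1 := by omega
        have e2 : prevT ρ (n + j + 1) = ρ₂.τ j + t := by
          unfold prevT
          rw [if_neg (by omega), show n + j + 1 - 1 = n + j by omega,
            (hsuf (n + j) (by omega)).2, show n + j - n = j by omega]
        rw [e1, e2] at h
        have e3 : ρ₂.τ (j + 1) - prevT ρ₂ (j + 1) = ρ₂.τ (j + 1) + t - (ρ₂.τ j + t) := by
          simp [prevT]
        rw [hr' (j + 1), hr' (j + 2), if_neg (Nat.succ_ne_zero j),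
          if_neg (Nat.succ_ne_zero (j + 1)), e3,
          show n + (j + 1) = n + j + 1 by omega, show n + (j + 2) = n + j + 1 + 1 by omega]
        exact h
    · -- acceptance of the suffix run
      intro N
      obtain ⟨j, hj, hja⟩ := hacc (N + n)
      refine ⟨j - n, by omega, ?_⟩
      rw [hr' (j - n), if_neg (show j - n ≠ 0 by omega), show n + (j - n) = j by omega]
      exact hja
  · -- backward direction
    rintro ⟨s, ⟨ρ₁, hO, hd, r, ⟨⟨q, hq, hr0⟩, hfstep⟩, hs⟩, ρ₂, r', hr'0, hstep', hacc'⟩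
    subst hs
    set n := ρ₁.toList.length with hn
    set l := ρ₁.toList with hl
    have ht0 : 0 ≤ t := le_trans ρ₁.dur_nonneg hd
    -- the glued infinite word
    obtain ⟨w, hwσ, hwτ⟩ : ∃ w : ITW Sigma,
        (∀ i, w.σ i = if h : i < n then (l.get ⟨i, h⟩).1 else ρ₂.σ (i - n)) ∧
        (∀ i, w.τ i = if h : i < n then (l.get ⟨i, h⟩).2 else ρ₂.τ (i - n) + t) := by
      refine ⟨⟨fun i => if h : i < n then (l.get ⟨i, h⟩).1 else ρ₂.σ (i - n),
        fun i => if h : i < n then (l.get ⟨i, h⟩).2 else ρ₂.τ (i - n) + t,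
        ?_, ?_, ?_⟩, fun _ => rfl, fun _ => rfl⟩
      · intro i
        by_cases h : i < n
        · simp only [dif_pos h]
          exact ρ₁.nonneg _ (List.get_mem _ _)
        · simp only [dif_neg h]
          exact add_nonneg (ρ₂.nonneg _) ht0
      · apply monotone_nat_of_le_succ
        intro i
        by_cases h1 : i + 1 < n
        · simp only [dif_pos h1, dif_pos (show i < n by omega)]
          have := List.isChain_iff_getElem.mp ρ₁.mono i (by rw [List.length_map]; omega)
          simpa [List.get_eq_getElem, List.getElem_map] using this
        · by_cases h2 : i < n
          · simp only [dif_pos h2, dif_neg h1]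
            have hi : i = n - 1 := by omega
            have hdg : ρ₁.dur = (l.get ⟨i, h2⟩).2 := by
              subst hi
              exact ρ₁.dur_get (by omega)
            calc (l.get ⟨i, h2⟩).2 = ρ₁.dur := hdg.symm
              _ ≤ t := hd
              _ ≤ ρ₂.τ (i + 1 - n) + t := le_add_of_nonneg_left (ρ₂.nonneg _)
          · simp only [dif_neg h1, dif_neg h2]
            exact add_le_add (ρ₂.mono (by omega)) le_rfl
      · have h1 : Filter.Tendsto (fun i : ℕ => ρ₂.τ (i - n) + t) Filter.atTop Filter.atTop :=
          Filter.tendsto_atTop_add_const_right _ t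
            (ρ₂.div.comp (Filter.tendsto_sub_atTop_nat n))
        refine h1.congr' ?_
        filter_upwards [Filter.eventually_ge_atTop n] with i hi
        simp [dif_neg (not_lt.2 hi)]
    -- the glued run
    obtain ⟨R, hR⟩ : ∃ R : ℕ → Q × (C → ℝ), ∀ i, R i =
        if i ≤ n then r i else r' (i - n) := ⟨_, fun _ => rfl⟩
    have hprevw : ∀ i : ℕ, i ≤ n → prevT w i = listPrevT l i := by
      intro i hi
      unfold prevT listPrevT
      rcases Nat.eq_zero_or_pos i with h0 | h0
      · simp [h0]
      · have hlt : i - 1 < n := by omega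
        rw [if_neg (by omega), if_neg (by omega), hwτ (i - 1), dif_pos hlt,
          List.getD_eq_getElem?_getD, List.getElem?_eq_getElem (by simpa using hlt)]
        simp
    have hdurw : prevT w n = ρ₁.dur := by
      rw [hprevw n le_rfl, FTW.dur_eq_listPrevT]
    refine ⟨w, ⟨ρ₁, hO, ρ₂, trivial, hd, ?_, ?_⟩, q, hq, R, ?_, ?_, ?_⟩
    · -- IsConcat prefix condition
      intro i
      rw [hwσ i.1, hwτ i.1]
      constructor <;> simp [dif_pos i.2, hn, hl]
    · -- IsConcat suffix condition
      intro i hi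
      rw [hwσ i, hwτ i]
      constructor <;> simp [dif_neg (not_lt.2 hi), hn, hl]
    · rw [hR 0, if_pos (Nat.zero_le n)]
      exact hr0
    · -- steps of the glued run
      intro i
      rcases lt_trichotomy i n with hi | hi | hi
      · -- prefix steps
        have h := hfstep ⟨i, hi⟩
        rw [hR i, if_pos hi.le, hR (i + 1), if_pos (by omega), hwσ i, hwτ i,
          dif_pos hi, dif_pos hi, hprevw i hi.le]
        exact h
      · -- crossing step
        subst hi
        obtain ⟨lam, g, htr, hg, hres⟩ := hstep' 0
        rw [hR n, if_pos le_rfl, hR (n + 1), if_neg (by omega),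
          show n + 1 - n = 1 from by omega, hwσ n, hwτ n, dif_neg (lt_irrefl n),
          dif_neg (lt_irrefl n), show n - n = 0 from by omega, hdurw]
        rw [hr'0] at htr hg hres
        refine ⟨lam, g, htr, ?_, ?_⟩
        · have heq : (fun c => (r n).2 c + (ρ₂.τ 0 + t - ρ₁.dur)) =
              (fun c => ((r n).2 c + (t - ρ₁.dur)) + (ρ₂.τ 0 - prevT ρ₂ 0)) := by
            funext c
            simp [prevT]
            ring
          exact heq ▸ hg
        · rw [hres]
          funext c
          by_cases hc : c ∈ lam <;> simp [hc, prevT] <;> ring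
      · -- suffix steps
        have hk : 1 ≤ i - n := by omega
        have h := hstep' (i - n)
        rw [hR i, if_neg (by omega), hR (i + 1), if_neg (by omega),
          show i + 1 - n = i - n + 1 from by omega, hwσ i, hwτ i,
          dif_neg (by omega : ¬ i < n), dif_neg (by omega : ¬ i < n)]
        have e2 : prevT w i = ρ₂.τ (i - n - 1) + t := by
          unfold prevT
          rw [if_neg (by omega), hwτ (i - 1), dif_neg (by omega : ¬ i - 1 < n),
            show i - 1 - n = i - n - 1 from by omega]
        have e3 : ρ₂.τ (i - n) + t - prevT w i = ρ₂.τ (i - n) - prevT ρ₂ (i - n) := by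
          rw [e2]
          unfold prevT
          rw [if_neg (by omega)]
          ring
        rw [e3]
        exact h
    · -- acceptance
      intro N
      obtain ⟨i, hi, hia⟩ := hacc' N
      refine ⟨n + i, by omega, ?_⟩
      rw [hR (n + i), if_neg (by omega), show n + i - n = i from by omega]
      exact hia
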